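/- Let X be the generic 6×6 symmetric matrix with entries x_{ij} = x_{ji}, labeled as a=x11, b=x12, c=x13, d=x14, e=x15, f=x16, g=x22, h=x23, i=x24, j=x25, k=x26, l=x33, m=x34, n=x35, o=x36, p=x44, q=x45, r=x46, s=x55, t=x56, u=x66, over a field of characteristic 0. Then the degree-three differential operator E·I·O − D·J·O − E·H·R + C·J·R + D·H·T − C·I·T (where each capital letter denotes the partial derivative with respect to the corresponding lowercase variable) annihilates perm(X). -/

import Mathlib

open MvPolynomial

/-- The permanent of the generic symmetric `6×6` matrix. -/
noncomputable def symPerm6 (K : Type*) [Field K] : MvPolynomial (Sym2 (Fin 6)) K :=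
  ∑ σ : Equiv.Perm (Fin 6), ∏ i : Fin 6, X s(i, σ i)

namespace SymPermAux
open Equiv Finsupp

noncomputable def expo (σ : Equiv.Perm (Fin 6)) : Sym2 (Fin 6) →₀ ℕ :=
  ∑ t : Fin 6, Finsupp.single s(t, σ t) 1

theorem symPerm6_eq (K : Type*) [Field K] :
    symPerm6 K = ∑ σ : Equiv.Perm (Fin 6), monomial (expo σ) (1 : K) := by
  refine Finset.sum_congr rfl fun σ _ => ?_
  rw [expo, monomial_sum_one]
  exact Finset.prod_congr rfl fun i _ => by rw [← X_pow_eq_monomial, pow_one]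

theorem expo_apply (σ : Equiv.Perm (Fin 6)) (m : Sym2 (Fin 6)) :
    expo σ m = ∑ t : Fin 6, (Finsupp.single s(t, σ t) 1) m := by
  rw [expo]; exact Finsupp.finset_sum_apply _ _ _

theorem expo_leq (σ : Equiv.Perm (Fin 6)) (m : Sym2 (Fin 6)) {t1 t2 t3 : Fin 6}
    (h12 : t1 ≠ t2) (h13 : t1 ≠ t3) (h23 : t2 ≠ t3) :
    (Finsupp.single s(t1, σ t1) 1) m + (Finsupp.single s(t2, σ t2) 1) m
      + (Finsupp.single s(t3, σ t3) 1) m ≤ expo σ m := by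
  rw [expo_apply]
  have : ({t1, t2, t3} : Finset (Fin 6)).sum (fun t => (Finsupp.single s(t, σ t) 1) m)
      = (Finsupp.single s(t1, σ t1) 1) m + (Finsupp.single s(t2, σ t2) 1) m
        + (Finsupp.single s(t3, σ t3) 1) m := by
    rw [Finset.sum_insert (by simp [h12, h13]), Finset.sum_insert (by simp [h23]),
      Finset.sum_singleton, add_assoc]
  rw [← this]
  exact Finset.sum_le_sum_of_subset (Finset.subset_univ _)

theorem expo_swap {x y : Fin 6} (hxy : x ≠ y) (σ : Equiv.Perm (Fin 6)) :
    expo (σ * Equiv.swap x y) + (Finsupp.single s(x, σ x) 1 + Finsupp.single s(y, σ y) 1)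
      = expo σ + (Finsupp.single s(x, σ y) 1 + Finsupp.single s(y, σ x) 1) := by
  have h1 : expo (σ * Equiv.swap x y) = ∑ t : Fin 6, Finsupp.single s(Equiv.swap x y t, σ t) 1 := by
    rw [expo]
    refine Fintype.sum_equiv (Equiv.swap x y) _ _ fun t => ?_
    simp [Equiv.Perm.mul_apply]
  rw [h1, expo]
  rw [← Finset.sum_erase_add Finset.univ _ (Finset.mem_univ x),
      ← Finset.sum_erase_add _ _ (Finset.mem_erase.2 ⟨hxy.symm, Finset.mem_univ y⟩),
      ← Finset.sum_erase_add Finset.univ (fun t => Finsupp.single s(t, σ t) 1) (Finset.mem_univ x),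
      ← Finset.sum_erase_add _ (fun t => Finsupp.single s(t, σ t) 1)
        (Finset.mem_erase.2 ⟨hxy.symm, Finset.mem_univ y⟩)]
  have hrest : ∑ t ∈ (Finset.univ.erase x).erase y, Finsupp.single s(Equiv.swap x y t, σ t) 1
      = ∑ t ∈ (Finset.univ.erase x).erase y, Finsupp.single s(t, σ t) 1 := by
    refine Finset.sum_congr rfl fun t ht => ?_
    rw [Finset.mem_erase, Finset.mem_erase] at ht
    rw [Equiv.swap_apply_of_ne_of_ne ht.2.1 ht.1]
  rw [hrest, Equiv.swap_apply_left, Equiv.swap_apply_right]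
  abel

theorem expo_count {a b : Fin 6} (hab : a ≠ b) (σ : Equiv.Perm (Fin 6)) :
    expo σ s(a, b) = (if σ a = b then 1 else 0) + (if σ b = a then 1 else 0) := by
  rw [expo, Finsupp.finset_sum_apply]
  have key : ∀ t : Fin 6, (Finsupp.single s(t, σ t) 1) s(a, b)
      = (if t = a then (if σ a = b then 1 else 0) else 0)
        + (if t = b then (if σ b = a then 1 else 0) else 0) := by
    intro t
    simp only [Finsupp.single_apply, Sym2.eq_iff]
    split_ifs <;> simp_all
  rw [Finset.sum_congr rfl fun t _ => key t, Finset.sum_add_distrib,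
    Finset.sum_ite_eq' Finset.univ a, Finset.sum_ite_eq' Finset.univ b]
  simp

theorem deriv3 (K : Type*) [Field K] {v1 v2 v3 : Sym2 (Fin 6)}
    (h21 : v2 ≠ v1) (h31 : v3 ≠ v1) (h32 : v3 ≠ v2) :
    pderiv v1 (pderiv v2 (pderiv v3 (symPerm6 K)))
      = ∑ σ : Equiv.Perm (Fin 6),
          monomial (expo σ - (Finsupp.single v1 1 + Finsupp.single v2 1 + Finsupp.single v3 1))
            ((expo σ v1 * expo σ v2 * expo σ v3 : ℕ) : K) := by
  rw [symPerm6_eq, map_sum, map_sum, map_sum]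
  refine Finset.sum_congr rfl fun σ _ => ?_
  rw [pderiv_monomial, pderiv_monomial, pderiv_monomial]
  have e2 : ((expo σ - Finsupp.single v3 1 : Sym2 (Fin 6) →₀ ℕ)) v2 = expo σ v2 := by
    rw [Finsupp.tsub_apply, Finsupp.single_eq_of_ne' h32, Nat.sub_zero]
  have e1 : ((expo σ - Finsupp.single v3 1 - Finsupp.single v2 1 : Sym2 (Fin 6) →₀ ℕ)) v1
      = expo σ v1 := by
    rw [Finsupp.tsub_apply, Finsupp.tsub_apply, Finsupp.single_eq_of_ne' h31,
      Finsupp.single_eq_of_ne' h21, Nat.sub_zero, Nat.sub_zero]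
  rw [e2, e1]
  congr 1
  · rw [tsub_tsub, tsub_tsub]
    congr 1
    abel
  · push_cast; ring

open scoped Classical in
noncomputable def SG (K : Type*) [Field K] (c : Equiv.Perm (Fin 6) → Prop)
    (E : Equiv.Perm (Fin 6) → (Sym2 (Fin 6) →₀ ℕ)) : MvPolynomial (Sym2 (Fin 6)) K :=
  ∑ σ : Equiv.Perm (Fin 6), if c σ then monomial (E σ) (1 : K) else 0

theorem SG_congr {K : Type*} [Field K] {c d : Equiv.Perm (Fin 6) → Prop}
    {E F : Equiv.Perm (Fin 6) → (Sym2 (Fin 6) →₀ ℕ)}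
    (hcd : ∀ σ, c σ ↔ d σ) (hEF : ∀ σ, c σ → E σ = F σ) : SG K c E = SG K d F := by
  classical
  rw [SG, SG]
  refine Finset.sum_congr rfl fun σ _ => ?_
  by_cases h : c σ
  · rw [if_pos h, if_pos ((hcd σ).1 h), hEF σ h]
  · rw [if_neg h, if_neg (fun h' => h ((hcd σ).2 h'))]

theorem monomial_ite3 {K : Type*} [Field K] (E : Sym2 (Fin 6) →₀ ℕ) (P1 P2 P3 : Prop)
    [Decidable P1] [Decidable P2] [Decidable P3] :
    monomial E (((if P1 then 1 else 0) * (if P2 then 1 else 0) * (if P3 then 1 else 0) : K))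
    = (if P1 ∧ P2 ∧ P3 then monomial E (1 : K) else 0) := by
  split_ifs <;> simp_all

theorem indicator_expand {K : Type*} [Field K] (E : Sym2 (Fin 6) →₀ ℕ)
    (P1 Q1 P2 Q2 P3 Q3 : Prop) [Decidable P1] [Decidable Q1] [Decidable P2] [Decidable Q2]
    [Decidable P3] [Decidable Q3] :
    monomial E ((((if P1 then 1 else 0) + (if Q1 then 1 else 0))
        * ((if P2 then 1 else 0) + (if Q2 then 1 else 0))
        * ((if P3 then 1 else 0) + (if Q3 then 1 else 0)) : K))
    = (if P1 ∧ P2 ∧ P3 then monomial E (1 : K) else 0)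
      + (if P1 ∧ P2 ∧ Q3 then monomial E (1 : K) else 0)
      + (if P1 ∧ Q2 ∧ P3 then monomial E (1 : K) else 0)
      + (if P1 ∧ Q2 ∧ Q3 then monomial E (1 : K) else 0)
      + (if Q1 ∧ P2 ∧ P3 then monomial E (1 : K) else 0)
      + (if Q1 ∧ P2 ∧ Q3 then monomial E (1 : K) else 0)
      + (if Q1 ∧ Q2 ∧ P3 then monomial E (1 : K) else 0)
      + (if Q1 ∧ Q2 ∧ Q3 then monomial E (1 : K) else 0) := by
  have hring : (((if P1 then 1 else 0) + (if Q1 then 1 else 0))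
        * ((if P2 then 1 else 0) + (if Q2 then 1 else 0))
        * ((if P3 then 1 else 0) + (if Q3 then 1 else 0)) : K)
      = (if P1 then 1 else 0) * (if P2 then 1 else 0) * (if P3 then 1 else 0)
        + (if P1 then 1 else 0) * (if P2 then 1 else 0) * (if Q3 then 1 else 0)
        + (if P1 then 1 else 0) * (if Q2 then 1 else 0) * (if P3 then 1 else 0)
        + (if P1 then 1 else 0) * (if Q2 then 1 else 0) * (if Q3 then 1 else 0)
        + (if Q1 then 1 else 0) * (if P2 then 1 else 0) * (if P3 then 1 else 0)
        + (if Q1 then 1 else 0) * (if P2 then 1 else 0) * (if Q3 then 1 else 0)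
        + (if Q1 then 1 else 0) * (if Q2 then 1 else 0) * (if P3 then 1 else 0)
        + (if Q1 then 1 else 0) * (if Q2 then 1 else 0) * (if Q3 then 1 else 0) := by ring
  rw [hring, map_add, map_add, map_add, map_add, map_add, map_add, map_add,
    monomial_ite3, monomial_ite3, monomial_ite3, monomial_ite3, monomial_ite3,
    monomial_ite3, monomial_ite3, monomial_ite3]

open scoped Classical in
theorem master (K : Type*) [Field K] {x y : Fin 6} (cx cy : Fin 6) (hxy : x ≠ y)
    (w3 : Sym2 (Fin 6)) (P : Equiv.Perm (Fin 6) → Prop)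
    (hP : ∀ σ, P (σ * Equiv.swap x y) ↔ P σ)
    (hw : ∀ σ, P σ → ∃ t, t ≠ x ∧ t ≠ y ∧ w3 = s(t, σ t)) :
    SG K (fun σ => σ x = cx ∧ σ y = cy ∧ P σ)
      (fun σ => expo σ - (Finsupp.single s(x, cx) 1 + Finsupp.single s(y, cy) 1
        + Finsupp.single w3 1))
    = SG K (fun σ => σ x = cy ∧ σ y = cx ∧ P σ)
      (fun σ => expo σ - (Finsupp.single s(x, cy) 1 + Finsupp.single s(y, cx) 1
        + Finsupp.single w3 1)) := by
  rw [SG, SG]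
  refine Fintype.sum_equiv (Equiv.mulRight (Equiv.swap x y)) _ _ fun σ => ?_
  have hx : (σ * Equiv.swap x y) x = σ y := by simp
  have hy : (σ * Equiv.swap x y) y = σ x := by simp
  simp only [Equiv.coe_mulRight]
  by_cases hc : σ x = cx ∧ σ y = cy ∧ P σ
  · obtain ⟨hσx, hσy, hPσ⟩ := hc
    have hc' : (σ * Equiv.swap x y) x = cy ∧ (σ * Equiv.swap x y) y = cx
        ∧ P (σ * Equiv.swap x y) := ⟨by rw [hx, hσy], by rw [hy, hσx], (hP σ).2 hPσ⟩
    rw [if_pos ⟨hσx, hσy, hPσ⟩]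
    refine Eq.trans ?_ (if_pos hc').symm
    obtain ⟨t3, ht3x, ht3y, hw3⟩ := hw σ hPσ
    have hexp : expo σ - (Finsupp.single s(x, cx) 1 + Finsupp.single s(y, cy) 1
        + Finsupp.single w3 1) = expo (σ * Equiv.swap x y) - (Finsupp.single s(x, cy) 1
        + Finsupp.single s(y, cx) 1 + Finsupp.single w3 1) := by
      ext m
      have hadd := congrArg (fun f : Sym2 (Fin 6) →₀ ℕ => f m) (expo_swap hxy σ)
      simp only [Finsupp.add_apply] at hadd
      rw [hσx, hσy] at hadd
      have hineq1 := expo_leq σ m hxy (Ne.symm ht3x) (Ne.symm ht3y)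
      rw [hσx, hσy, ← hw3] at hineq1
      have hineq2 := expo_leq (σ * Equiv.swap x y) m hxy (Ne.symm ht3x) (Ne.symm ht3y)
      have h3 : (σ * Equiv.swap x y) t3 = σ t3 := by
        simp [Equiv.Perm.mul_apply, Equiv.swap_apply_of_ne_of_ne ht3x ht3y]
      rw [hx, hy, h3, hσx, hσy, ← hw3] at hineq2
      simp only [Finsupp.tsub_apply, Finsupp.add_apply] at *
      omega
    rw [hexp]
  · rw [if_neg hc]
    symm
    apply if_neg
    intro h
    exact hc ⟨by rw [← hy]; exact h.2.1, by rw [← hx]; exact h.1, (hP σ).1 h.2.2⟩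

noncomputable def EX (b1 b2 b3 : Fin 6) : Equiv.Perm (Fin 6) → (Sym2 (Fin 6) →₀ ℕ) :=
  fun σ => expo σ - (Finsupp.single s((0 : Fin 6), b1) 1 + Finsupp.single s((1 : Fin 6), b2) 1
    + Finsupp.single s((5 : Fin 6), b3) 1)

theorem opterm (K : Type*) [Field K] (b1 b2 b3 : Fin 6)
    (h : b1 ≠ 0 ∧ b1 ≠ 1 ∧ b1 ≠ 5 ∧ b2 ≠ 0 ∧ b2 ≠ 1 ∧ b2 ≠ 5
      ∧ b3 ≠ 0 ∧ b3 ≠ 1 ∧ b3 ≠ 5 ∧ b1 ≠ b2 ∧ b1 ≠ b3 ∧ b2 ≠ b3) :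
    pderiv s((0:Fin 6), b1) (pderiv s((1:Fin 6), b2) (pderiv s((5:Fin 6), b3) (symPerm6 K)))
    = SG K (fun σ => σ 0 = b1 ∧ σ 1 = b2 ∧ σ 5 = b3) (EX b1 b2 b3)
      + SG K (fun σ => σ 0 = b1 ∧ σ 1 = b2 ∧ σ b3 = 5) (EX b1 b2 b3)
      + SG K (fun σ => σ 0 = b1 ∧ σ b2 = 1 ∧ σ 5 = b3) (EX b1 b2 b3)
      + SG K (fun σ => σ 0 = b1 ∧ σ b2 = 1 ∧ σ b3 = 5) (EX b1 b2 b3)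
      + SG K (fun σ => σ b1 = 0 ∧ σ 1 = b2 ∧ σ 5 = b3) (EX b1 b2 b3)
      + SG K (fun σ => σ b1 = 0 ∧ σ 1 = b2 ∧ σ b3 = 5) (EX b1 b2 b3)
      + SG K (fun σ => σ b1 = 0 ∧ σ b2 = 1 ∧ σ 5 = b3) (EX b1 b2 b3)
      + SG K (fun σ => σ b1 = 0 ∧ σ b2 = 1 ∧ σ b3 = 5) (EX b1 b2 b3) := by
  obtain ⟨h10, h11, h15, h20, h21, h25, h30, h31, h35, h12, h13, h23⟩ := h
  have hv21 : s((1:Fin 6), b2) ≠ s((0:Fin 6), b1) := by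
    intro hne
    rcases Sym2.eq_iff.mp hne with ⟨h', _⟩ | ⟨h', _⟩
    · exact absurd h' (by decide)
    · exact h11 h'.symm
  have hv31 : s((5:Fin 6), b3) ≠ s((0:Fin 6), b1) := by
    intro hne
    rcases Sym2.eq_iff.mp hne with ⟨h', _⟩ | ⟨h', _⟩
    · exact absurd h' (by decide)
    · exact h15 h'.symm
  have hv32 : s((5:Fin 6), b3) ≠ s((1:Fin 6), b2) := by
    intro hne
    rcases Sym2.eq_iff.mp hne with ⟨h', _⟩ | ⟨h', _⟩
    · exact absurd h' (by decide)
    · exact h25 h'.symm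
  rw [deriv3 K hv21 hv31 hv32]
  simp only [SG]
  repeat rw [← Finset.sum_add_distrib]
  refine Finset.sum_congr rfl fun σ _ => ?_
  rw [expo_count (Ne.symm h10) σ, expo_count (Ne.symm h21) σ, expo_count (Ne.symm h35) σ]
  push_cast
  rw [indicator_expand]
  congr!

theorem mulswap_iff (σ : Equiv.Perm (Fin 6)) (x y t v : Fin 6) (h1 : t ≠ x) (h2 : t ≠ y) :
    ((σ * Equiv.swap x y) t = v) ↔ (σ t = v) := by
  rw [Equiv.Perm.mul_apply, Equiv.swap_apply_of_ne_of_ne h1 h2]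

theorem key01out (K : Type*) [Field K] (b1 b2 b3 : Fin 6) (P : Equiv.Perm (Fin 6) → Prop)
    (hP : ∀ σ, P (σ * Equiv.swap 0 1) ↔ P σ)
    (hw : ∀ σ, P σ → ∃ t, t ≠ (0 : Fin 6) ∧ t ≠ (1 : Fin 6) ∧ s((5:Fin 6), b3) = s(t, σ t)) :
    SG K (fun σ => σ 0 = b1 ∧ σ 1 = b2 ∧ P σ) (EX b1 b2 b3)
      = SG K (fun σ => σ 0 = b2 ∧ σ 1 = b1 ∧ P σ) (EX b2 b1 b3) := by
  unfold EX
  exact master K (x := 0) (y := 1) b1 b2 (by decide) s((5:Fin 6), b3) P hP hw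

set_option maxHeartbeats 2000000 in
theorem key01in (K : Type*) [Field K] (b1 b2 b3 : Fin 6) (h12 : b1 ≠ b2)
    (P : Equiv.Perm (Fin 6) → Prop)
    (hP : ∀ σ, P (σ * Equiv.swap b1 b2) ↔ P σ)
    (hw : ∀ σ, P σ → ∃ t, t ≠ b1 ∧ t ≠ b2 ∧ s((5:Fin 6), b3) = s(t, σ t)) :
    SG K (fun σ => σ b1 = 0 ∧ σ b2 = 1 ∧ P σ) (EX b1 b2 b3)
      = SG K (fun σ => σ b2 = 0 ∧ σ b1 = 1 ∧ P σ) (EX b2 b1 b3) := by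
  calc SG K (fun σ => σ b1 = 0 ∧ σ b2 = 1 ∧ P σ) (EX b1 b2 b3)
      = SG K (fun σ => σ b1 = 0 ∧ σ b2 = 1 ∧ P σ)
          (fun σ => expo σ - (Finsupp.single s(b1, (0:Fin 6)) 1
            + Finsupp.single s(b2, (1:Fin 6)) 1 + Finsupp.single s((5:Fin 6), b3) 1)) :=
        SG_congr (fun _ => Iff.rfl) (fun σ _ => by
          simp only [EX]
          congr 1
          rw [show s(b1, (0:Fin 6)) = s((0:Fin 6), b1) from Sym2.eq_swap,
            show s(b2, (1:Fin 6)) = s((1:Fin 6), b2) from Sym2.eq_swap])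
    _ = SG K (fun σ => σ b1 = 1 ∧ σ b2 = 0 ∧ P σ)
          (fun σ => expo σ - (Finsupp.single s(b1, (1:Fin 6)) 1
            + Finsupp.single s(b2, (0:Fin 6)) 1 + Finsupp.single s((5:Fin 6), b3) 1)) :=
        master K (x := b1) (y := b2) 0 1 h12 s((5:Fin 6), b3) P hP hw
    _ = SG K (fun σ => σ b2 = 0 ∧ σ b1 = 1 ∧ P σ) (EX b2 b1 b3) :=
        SG_congr (fun σ => by tauto) (fun σ _ => by
          simp only [EX]
          congr 1
          rw [show s(b1, (1:Fin 6)) = s((1:Fin 6), b1) from Sym2.eq_swap,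
            show s(b2, (0:Fin 6)) = s((0:Fin 6), b2) from Sym2.eq_swap]
          abel)

set_option maxHeartbeats 2000000 in
theorem key02out (K : Type*) [Field K] (b1 b2 b3 : Fin 6) (Q : Equiv.Perm (Fin 6) → Prop)
    (hQ : ∀ σ, Q (σ * Equiv.swap 0 5) ↔ Q σ)
    (hw : ∀ σ, Q σ → ∃ t, t ≠ (0 : Fin 6) ∧ t ≠ (5 : Fin 6) ∧ s((1:Fin 6), b2) = s(t, σ t)) :
    SG K (fun σ => σ 0 = b1 ∧ Q σ ∧ σ 5 = b3) (EX b1 b2 b3)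
      = SG K (fun σ => σ 0 = b3 ∧ Q σ ∧ σ 5 = b1) (EX b3 b2 b1) := by
  calc SG K (fun σ => σ 0 = b1 ∧ Q σ ∧ σ 5 = b3) (EX b1 b2 b3)
      = SG K (fun σ => σ 0 = b1 ∧ σ 5 = b3 ∧ Q σ)
          (fun σ => expo σ - (Finsupp.single s((0:Fin 6), b1) 1
            + Finsupp.single s((5:Fin 6), b3) 1 + Finsupp.single s((1:Fin 6), b2) 1)) :=
        SG_congr (fun σ => by tauto) (fun σ _ => by simp only [EX]; congr 1; abel)
    _ = SG K (fun σ => σ 0 = b3 ∧ σ 5 = b1 ∧ Q σ)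
          (fun σ => expo σ - (Finsupp.single s((0:Fin 6), b3) 1
            + Finsupp.single s((5:Fin 6), b1) 1 + Finsupp.single s((1:Fin 6), b2) 1)) :=
        master K (x := 0) (y := 5) b1 b3 (by decide) s((1:Fin 6), b2) Q hQ hw
    _ = SG K (fun σ => σ 0 = b3 ∧ Q σ ∧ σ 5 = b1) (EX b3 b2 b1) :=
        SG_congr (fun σ => by tauto) (fun σ _ => by simp only [EX]; congr 1; abel)

set_option maxHeartbeats 2000000 in
theorem key02in (K : Type*) [Field K] (b1 b2 b3 : Fin 6) (h13 : b1 ≠ b3)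
    (Q : Equiv.Perm (Fin 6) → Prop)
    (hQ : ∀ σ, Q (σ * Equiv.swap b1 b3) ↔ Q σ)
    (hw : ∀ σ, Q σ → ∃ t, t ≠ b1 ∧ t ≠ b3 ∧ s((1:Fin 6), b2) = s(t, σ t)) :
    SG K (fun σ => σ b1 = 0 ∧ Q σ ∧ σ b3 = 5) (EX b1 b2 b3)
      = SG K (fun σ => σ b3 = 0 ∧ Q σ ∧ σ b1 = 5) (EX b3 b2 b1) := by
  calc SG K (fun σ => σ b1 = 0 ∧ Q σ ∧ σ b3 = 5) (EX b1 b2 b3)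
      = SG K (fun σ => σ b1 = 0 ∧ σ b3 = 5 ∧ Q σ)
          (fun σ => expo σ - (Finsupp.single s(b1, (0:Fin 6)) 1
            + Finsupp.single s(b3, (5:Fin 6)) 1 + Finsupp.single s((1:Fin 6), b2) 1)) :=
        SG_congr (fun σ => by tauto) (fun σ _ => by
          simp only [EX]
          congr 1
          rw [show s(b1, (0:Fin 6)) = s((0:Fin 6), b1) from Sym2.eq_swap,
            show s(b3, (5:Fin 6)) = s((5:Fin 6), b3) from Sym2.eq_swap]
          abel)
    _ = SG K (fun σ => σ b1 = 5 ∧ σ b3 = 0 ∧ Q σ)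
          (fun σ => expo σ - (Finsupp.single s(b1, (5:Fin 6)) 1
            + Finsupp.single s(b3, (0:Fin 6)) 1 + Finsupp.single s((1:Fin 6), b2) 1)) :=
        master K (x := b1) (y := b3) 0 5 h13 s((1:Fin 6), b2) Q hQ hw
    _ = SG K (fun σ => σ b3 = 0 ∧ Q σ ∧ σ b1 = 5) (EX b3 b2 b1) :=
        SG_congr (fun σ => by tauto) (fun σ _ => by
          simp only [EX]
          congr 1
          rw [show s(b1, (5:Fin 6)) = s((5:Fin 6), b1) from Sym2.eq_swap,
            show s(b3, (0:Fin 6)) = s((0:Fin 6), b3) from Sym2.eq_swap]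
          abel)

set_option maxHeartbeats 2000000 in
theorem key12out (K : Type*) [Field K] (b1 b2 b3 : Fin 6) (R : Equiv.Perm (Fin 6) → Prop)
    (hR : ∀ σ, R (σ * Equiv.swap 1 5) ↔ R σ)
    (hw : ∀ σ, R σ → ∃ t, t ≠ (1 : Fin 6) ∧ t ≠ (5 : Fin 6) ∧ s((0:Fin 6), b1) = s(t, σ t)) :
    SG K (fun σ => R σ ∧ σ 1 = b2 ∧ σ 5 = b3) (EX b1 b2 b3)
      = SG K (fun σ => R σ ∧ σ 1 = b3 ∧ σ 5 = b2) (EX b1 b3 b2) := by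
  calc SG K (fun σ => R σ ∧ σ 1 = b2 ∧ σ 5 = b3) (EX b1 b2 b3)
      = SG K (fun σ => σ 1 = b2 ∧ σ 5 = b3 ∧ R σ)
          (fun σ => expo σ - (Finsupp.single s((1:Fin 6), b2) 1
            + Finsupp.single s((5:Fin 6), b3) 1 + Finsupp.single s((0:Fin 6), b1) 1)) :=
        SG_congr (fun σ => by tauto) (fun σ _ => by simp only [EX]; congr 1; abel)
    _ = SG K (fun σ => σ 1 = b3 ∧ σ 5 = b2 ∧ R σ)
          (fun σ => expo σ - (Finsupp.single s((1:Fin 6), b3) 1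
            + Finsupp.single s((5:Fin 6), b2) 1 + Finsupp.single s((0:Fin 6), b1) 1)) :=
        master K (x := 1) (y := 5) b2 b3 (by decide) s((0:Fin 6), b1) R hR hw
    _ = SG K (fun σ => R σ ∧ σ 1 = b3 ∧ σ 5 = b2) (EX b1 b3 b2) :=
        SG_congr (fun σ => by tauto) (fun σ _ => by simp only [EX]; congr 1; abel)

set_option maxHeartbeats 2000000 in
theorem key12in (K : Type*) [Field K] (b1 b2 b3 : Fin 6) (h23 : b2 ≠ b3)
    (R : Equiv.Perm (Fin 6) → Prop)
    (hR : ∀ σ, R (σ * Equiv.swap b2 b3) ↔ R σ)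
    (hw : ∀ σ, R σ → ∃ t, t ≠ b2 ∧ t ≠ b3 ∧ s((0:Fin 6), b1) = s(t, σ t)) :
    SG K (fun σ => R σ ∧ σ b2 = 1 ∧ σ b3 = 5) (EX b1 b2 b3)
      = SG K (fun σ => R σ ∧ σ b3 = 1 ∧ σ b2 = 5) (EX b1 b3 b2) := by
  calc SG K (fun σ => R σ ∧ σ b2 = 1 ∧ σ b3 = 5) (EX b1 b2 b3)
      = SG K (fun σ => σ b2 = 1 ∧ σ b3 = 5 ∧ R σ)
          (fun σ => expo σ - (Finsupp.single s(b2, (1:Fin 6)) 1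
            + Finsupp.single s(b3, (5:Fin 6)) 1 + Finsupp.single s((0:Fin 6), b1) 1)) :=
        SG_congr (fun σ => by tauto) (fun σ _ => by
          simp only [EX]
          congr 1
          rw [show s(b2, (1:Fin 6)) = s((1:Fin 6), b2) from Sym2.eq_swap,
            show s(b3, (5:Fin 6)) = s((5:Fin 6), b3) from Sym2.eq_swap]
          abel)
    _ = SG K (fun σ => σ b2 = 5 ∧ σ b3 = 1 ∧ R σ)
          (fun σ => expo σ - (Finsupp.single s(b2, (5:Fin 6)) 1
            + Finsupp.single s(b3, (1:Fin 6)) 1 + Finsupp.single s((0:Fin 6), b1) 1)) :=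
        master K (x := b2) (y := b3) 1 5 h23 s((0:Fin 6), b1) R hR hw
    _ = SG K (fun σ => R σ ∧ σ b3 = 1 ∧ σ b2 = 5) (EX b1 b3 b2) :=
        SG_congr (fun σ => by tauto) (fun σ _ => by
          simp only [EX]
          congr 1
          rw [show s(b2, (5:Fin 6)) = s((5:Fin 6), b2) from Sym2.eq_swap,
            show s(b3, (1:Fin 6)) = s((1:Fin 6), b3) from Sym2.eq_swap]
          abel)

end SymPermAux

theorem degree_three_annihilates_perm_six {K : Type*} [Field K] [CharZero K] :
    pderiv s((0 : Fin 6), 4) (pderiv s((1 : Fin 6), 3) (pderiv s((2 : Fin 6), 5)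
        (symPerm6 K)))
      - pderiv s((0 : Fin 6), 3) (pderiv s((1 : Fin 6), 4) (pderiv s((2 : Fin 6), 5)
        (symPerm6 K)))
      - pderiv s((0 : Fin 6), 4) (pderiv s((1 : Fin 6), 2) (pderiv s((3 : Fin 6), 5)
        (symPerm6 K)))
      + pderiv s((0 : Fin 6), 2) (pderiv s((1 : Fin 6), 4) (pderiv s((3 : Fin 6), 5)
        (symPerm6 K)))
      + pderiv s((0 : Fin 6), 3) (pderiv s((1 : Fin 6), 2) (pderiv s((4 : Fin 6), 5)
        (symPerm6 K)))
      - pderiv s((0 : Fin 6), 2) (pderiv s((1 : Fin 6), 3) (pderiv s((4 : Fin 6), 5)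
        (symPerm6 K))) = 0 := by
  open SymPermAux in
  rw [show s((2 : Fin 6), (5 : Fin 6)) = s((5 : Fin 6), (2 : Fin 6)) from Sym2.eq_swap,
    show s((3 : Fin 6), (5 : Fin 6)) = s((5 : Fin 6), (3 : Fin 6)) from Sym2.eq_swap,
    show s((4 : Fin 6), (5 : Fin 6)) = s((5 : Fin 6), (4 : Fin 6)) from Sym2.eq_swap,
    opterm K 4 3 2 (by decide), opterm K 3 4 2 (by decide), opterm K 4 2 3 (by decide),
    opterm K 2 4 3 (by decide), opterm K 3 2 4 (by decide), opterm K 2 3 4 (by decide)]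
  -- EIO terms
  have h1 : SG K (fun σ => σ 0 = 4 ∧ σ 1 = 3 ∧ σ 5 = 2) (EX 4 3 2)
      = SG K (fun σ => σ 0 = 3 ∧ σ 1 = 4 ∧ σ 5 = 2) (EX 3 4 2) :=
    key01out K 4 3 2 _ (fun σ => mulswap_iff σ 0 1 5 2 (by decide) (by decide))
      (fun σ hq => ⟨5, by decide, by decide, by rw [hq]⟩)
  have h2 : SG K (fun σ => σ 0 = 4 ∧ σ 1 = 3 ∧ σ 2 = 5) (EX 4 3 2)
      = SG K (fun σ => σ 0 = 3 ∧ σ 1 = 4 ∧ σ 2 = 5) (EX 3 4 2) :=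
    key01out K 4 3 2 _ (fun σ => mulswap_iff σ 0 1 2 5 (by decide) (by decide))
      (fun σ hq => ⟨2, by decide, by decide, by rw [hq]; exact Sym2.eq_swap⟩)
  have h3 : SG K (fun σ => σ 0 = 4 ∧ σ 3 = 1 ∧ σ 5 = 2) (EX 4 3 2)
      = SG K (fun σ => σ 0 = 2 ∧ σ 3 = 1 ∧ σ 5 = 4) (EX 2 3 4) :=
    key02out K 4 3 2 _ (fun σ => mulswap_iff σ 0 5 3 1 (by decide) (by decide))
      (fun σ hq => ⟨3, by decide, by decide, by rw [hq]; exact Sym2.eq_swap⟩)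
  have h4 : SG K (fun σ => σ 0 = 4 ∧ σ 3 = 1 ∧ σ 2 = 5) (EX 4 3 2)
      = SG K (fun σ => σ 0 = 4 ∧ σ 2 = 1 ∧ σ 3 = 5) (EX 4 2 3) :=
    key12in K 4 3 2 (by decide) _ (fun σ => mulswap_iff σ 3 2 0 4 (by decide) (by decide))
      (fun σ hq => ⟨0, by decide, by decide, by rw [hq]⟩)
  have h5 : SG K (fun σ => σ 4 = 0 ∧ σ 1 = 3 ∧ σ 5 = 2) (EX 4 3 2)
      = SG K (fun σ => σ 4 = 0 ∧ σ 1 = 2 ∧ σ 5 = 3) (EX 4 2 3) :=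
    key12out K 4 3 2 _ (fun σ => mulswap_iff σ 1 5 4 0 (by decide) (by decide))
      (fun σ hq => ⟨4, by decide, by decide, by rw [hq]; exact Sym2.eq_swap⟩)
  have h6 : SG K (fun σ => σ 4 = 0 ∧ σ 1 = 3 ∧ σ 2 = 5) (EX 4 3 2)
      = SG K (fun σ => σ 2 = 0 ∧ σ 1 = 3 ∧ σ 4 = 5) (EX 2 3 4) :=
    key02in K 4 3 2 (by decide) _ (fun σ => mulswap_iff σ 4 2 1 3 (by decide) (by decide))
      (fun σ hq => ⟨1, by decide, by decide, by rw [hq]⟩)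
  have h7 : SG K (fun σ => σ 4 = 0 ∧ σ 3 = 1 ∧ σ 5 = 2) (EX 4 3 2)
      = SG K (fun σ => σ 3 = 0 ∧ σ 4 = 1 ∧ σ 5 = 2) (EX 3 4 2) :=
    key01in K 4 3 2 (by decide) _ (fun σ => mulswap_iff σ 4 3 5 2 (by decide) (by decide))
      (fun σ hq => ⟨5, by decide, by decide, by rw [hq]⟩)
  have h8 : SG K (fun σ => σ 4 = 0 ∧ σ 3 = 1 ∧ σ 2 = 5) (EX 4 3 2)
      = SG K (fun σ => σ 3 = 0 ∧ σ 4 = 1 ∧ σ 2 = 5) (EX 3 4 2) :=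
    key01in K 4 3 2 (by decide) _ (fun σ => mulswap_iff σ 4 3 2 5 (by decide) (by decide))
      (fun σ hq => ⟨2, by decide, by decide, by rw [hq]; exact Sym2.eq_swap⟩)
  -- CJR terms
  have h9 : SG K (fun σ => σ 0 = 2 ∧ σ 1 = 4 ∧ σ 5 = 3) (EX 2 4 3)
      = SG K (fun σ => σ 0 = 4 ∧ σ 1 = 2 ∧ σ 5 = 3) (EX 4 2 3) :=
    key01out K 2 4 3 _ (fun σ => mulswap_iff σ 0 1 5 3 (by decide) (by decide))
      (fun σ hq => ⟨5, by decide, by decide, by rw [hq]⟩)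
  have h10 : SG K (fun σ => σ 0 = 2 ∧ σ 1 = 4 ∧ σ 3 = 5) (EX 2 4 3)
      = SG K (fun σ => σ 0 = 4 ∧ σ 1 = 2 ∧ σ 3 = 5) (EX 4 2 3) :=
    key01out K 2 4 3 _ (fun σ => mulswap_iff σ 0 1 3 5 (by decide) (by decide))
      (fun σ hq => ⟨3, by decide, by decide, by rw [hq]; exact Sym2.eq_swap⟩)
  have h11 : SG K (fun σ => σ 0 = 2 ∧ σ 4 = 1 ∧ σ 5 = 3) (EX 2 4 3)
      = SG K (fun σ => σ 0 = 3 ∧ σ 4 = 1 ∧ σ 5 = 2) (EX 3 4 2) :=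
    key02out K 2 4 3 _ (fun σ => mulswap_iff σ 0 5 4 1 (by decide) (by decide))
      (fun σ hq => ⟨4, by decide, by decide, by rw [hq]; exact Sym2.eq_swap⟩)
  have h12 : SG K (fun σ => σ 0 = 2 ∧ σ 4 = 1 ∧ σ 3 = 5) (EX 2 4 3)
      = SG K (fun σ => σ 0 = 2 ∧ σ 3 = 1 ∧ σ 4 = 5) (EX 2 3 4) :=
    key12in K 2 4 3 (by decide) _ (fun σ => mulswap_iff σ 4 3 0 2 (by decide) (by decide))
      (fun σ hq => ⟨0, by decide, by decide, by rw [hq]⟩)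
  have h13 : SG K (fun σ => σ 2 = 0 ∧ σ 1 = 4 ∧ σ 5 = 3) (EX 2 4 3)
      = SG K (fun σ => σ 2 = 0 ∧ σ 1 = 3 ∧ σ 5 = 4) (EX 2 3 4) :=
    key12out K 2 4 3 _ (fun σ => mulswap_iff σ 1 5 2 0 (by decide) (by decide))
      (fun σ hq => ⟨2, by decide, by decide, by rw [hq]; exact Sym2.eq_swap⟩)
  have h14 : SG K (fun σ => σ 2 = 0 ∧ σ 1 = 4 ∧ σ 3 = 5) (EX 2 4 3)
      = SG K (fun σ => σ 3 = 0 ∧ σ 1 = 4 ∧ σ 2 = 5) (EX 3 4 2) :=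
    key02in K 2 4 3 (by decide) _ (fun σ => mulswap_iff σ 2 3 1 4 (by decide) (by decide))
      (fun σ hq => ⟨1, by decide, by decide, by rw [hq]⟩)
  have h15 : SG K (fun σ => σ 2 = 0 ∧ σ 4 = 1 ∧ σ 5 = 3) (EX 2 4 3)
      = SG K (fun σ => σ 4 = 0 ∧ σ 2 = 1 ∧ σ 5 = 3) (EX 4 2 3) :=
    key01in K 2 4 3 (by decide) _ (fun σ => mulswap_iff σ 2 4 5 3 (by decide) (by decide))
      (fun σ hq => ⟨5, by decide, by decide, by rw [hq]⟩)
  have h16 : SG K (fun σ => σ 2 = 0 ∧ σ 4 = 1 ∧ σ 3 = 5) (EX 2 4 3)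
      = SG K (fun σ => σ 4 = 0 ∧ σ 2 = 1 ∧ σ 3 = 5) (EX 4 2 3) :=
    key01in K 2 4 3 (by decide) _ (fun σ => mulswap_iff σ 2 4 3 5 (by decide) (by decide))
      (fun σ hq => ⟨3, by decide, by decide, by rw [hq]; exact Sym2.eq_swap⟩)
  -- DHT terms
  have h17 : SG K (fun σ => σ 0 = 3 ∧ σ 1 = 2 ∧ σ 5 = 4) (EX 3 2 4)
      = SG K (fun σ => σ 0 = 2 ∧ σ 1 = 3 ∧ σ 5 = 4) (EX 2 3 4) :=
    key01out K 3 2 4 _ (fun σ => mulswap_iff σ 0 1 5 4 (by decide) (by decide))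
      (fun σ hq => ⟨5, by decide, by decide, by rw [hq]⟩)
  have h18 : SG K (fun σ => σ 0 = 3 ∧ σ 1 = 2 ∧ σ 4 = 5) (EX 3 2 4)
      = SG K (fun σ => σ 0 = 2 ∧ σ 1 = 3 ∧ σ 4 = 5) (EX 2 3 4) :=
    key01out K 3 2 4 _ (fun σ => mulswap_iff σ 0 1 4 5 (by decide) (by decide))
      (fun σ hq => ⟨4, by decide, by decide, by rw [hq]; exact Sym2.eq_swap⟩)
  have h19 : SG K (fun σ => σ 0 = 3 ∧ σ 2 = 1 ∧ σ 5 = 4) (EX 3 2 4)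
      = SG K (fun σ => σ 0 = 4 ∧ σ 2 = 1 ∧ σ 5 = 3) (EX 4 2 3) :=
    key02out K 3 2 4 _ (fun σ => mulswap_iff σ 0 5 2 1 (by decide) (by decide))
      (fun σ hq => ⟨2, by decide, by decide, by rw [hq]; exact Sym2.eq_swap⟩)
  have h20 : SG K (fun σ => σ 0 = 3 ∧ σ 2 = 1 ∧ σ 4 = 5) (EX 3 2 4)
      = SG K (fun σ => σ 0 = 3 ∧ σ 4 = 1 ∧ σ 2 = 5) (EX 3 4 2) :=
    key12in K 3 2 4 (by decide) _ (fun σ => mulswap_iff σ 2 4 0 3 (by decide) (by decide))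
      (fun σ hq => ⟨0, by decide, by decide, by rw [hq]⟩)
  have h21 : SG K (fun σ => σ 3 = 0 ∧ σ 1 = 2 ∧ σ 5 = 4) (EX 3 2 4)
      = SG K (fun σ => σ 3 = 0 ∧ σ 1 = 4 ∧ σ 5 = 2) (EX 3 4 2) :=
    key12out K 3 2 4 _ (fun σ => mulswap_iff σ 1 5 3 0 (by decide) (by decide))
      (fun σ hq => ⟨3, by decide, by decide, by rw [hq]; exact Sym2.eq_swap⟩)
  have h22 : SG K (fun σ => σ 3 = 0 ∧ σ 1 = 2 ∧ σ 4 = 5) (EX 3 2 4)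
      = SG K (fun σ => σ 4 = 0 ∧ σ 1 = 2 ∧ σ 3 = 5) (EX 4 2 3) :=
    key02in K 3 2 4 (by decide) _ (fun σ => mulswap_iff σ 3 4 1 2 (by decide) (by decide))
      (fun σ hq => ⟨1, by decide, by decide, by rw [hq]⟩)
  have h23 : SG K (fun σ => σ 3 = 0 ∧ σ 2 = 1 ∧ σ 5 = 4) (EX 3 2 4)
      = SG K (fun σ => σ 2 = 0 ∧ σ 3 = 1 ∧ σ 5 = 4) (EX 2 3 4) :=
    key01in K 3 2 4 (by decide) _ (fun σ => mulswap_iff σ 3 2 5 4 (by decide) (by decide))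
      (fun σ hq => ⟨5, by decide, by decide, by rw [hq]⟩)
  have h24 : SG K (fun σ => σ 3 = 0 ∧ σ 2 = 1 ∧ σ 4 = 5) (EX 3 2 4)
      = SG K (fun σ => σ 2 = 0 ∧ σ 3 = 1 ∧ σ 4 = 5) (EX 2 3 4) :=
    key01in K 3 2 4 (by decide) _ (fun σ => mulswap_iff σ 3 2 4 5 (by decide) (by decide))
      (fun σ hq => ⟨4, by decide, by decide, by rw [hq]; exact Sym2.eq_swap⟩)
  linear_combination h1 + h2 + h3 + h4 + h5 + h6 + h7 + h8 + h9 + h10 + h11 + h12 + h13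
    + h14 + h15 + h16 + h17 + h18 + h19 + h20 + h21 + h22 + h23 + h24
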